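/- For real 0 < r < 1, the integral over [0, 2π] of log((1+r²) + (r²−1)cos(y))·cos(y) dy equals −2π·(1−r)/(1+r). -/

import Mathlib

open Real

lemma aux_alg (r s co L : ℝ) (hr0 : 0 < r) (hr1 : r < 1) (hpy : s^2 + co^2 = 1)
    (hG : (1 + r^2) + (r^2 - 1) * co ≠ 0) (hcy : -(1 + r)/(1 - r) + co ≠ 0) :
    L * co = (co * L + s * ((r^2 - 1) * (-s) / ((1 + r^2) + (r^2 - 1) * co))) - co
      - (1 - r)/(1 + r)
      - (4 * r / (1 - r^2)) *
        (1 / (1 + (s / (-(1 + r)/(1 - r) + co))^2) *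
         ((co * (-(1 + r)/(1 - r) + co) - s * (-s)) / (-(1 + r)/(1 - r) + co)^2)) := by
  have h1 : (1 - r : ℝ) ≠ 0 := by linarith
  have h2 : (1 + r : ℝ) ≠ 0 := by linarith
  have h3 : (1 - r^2 : ℝ) ≠ 0 := by nlinarith
  set d : ℝ := -(1 + r)/(1 - r) + co with hd
  set G : ℝ := (1 + r^2) + (r^2 - 1) * co with hGdef
  have hs2 : s^2 = 1 - co^2 := by linarith
  have hds : d^2 + s^2 ≠ 0 := by
    intro h
    exact hcy (by nlinarith [sq_nonneg d, sq_nonneg s])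
  have hkey : 1 / (1 + (s/d)^2) * ((co * d - s * (-s)) / d^2)
      = (co * d + s^2) / (d^2 + s^2) := by
    field_simp
    ring
  rw [hkey]
  have hnum : co * d + s^2 = ((1 - r) - (1 + r) * co) / (1 - r) := by
    rw [hs2, hd]; field_simp; ring
  have hden : d^2 + s^2 = 2 * G / (1 - r)^2 := by
    rw [hs2, hd, hGdef]; field_simp; ring
  rw [hnum, hden]
  have hrw : s * ((r ^ 2 - 1) * -s / G) = (r^2 - 1) * -(s^2) / G := by ring
  rw [hrw, hs2]
  field_simp
  ring

theorem integral_log_kernel_cos (r : ℝ) (hr0 : 0 < r) (hr1 : r < 1) :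
    ∫ y in (0:ℝ)..(2 * π),
        Real.log ((1 + r ^ 2) + (r ^ 2 - 1) * Real.cos y) * Real.cos y
      = -(2 * π) * (1 - r) / (1 + r) := by
  have hr1' : (0:ℝ) < 1 - r := by linarith
  have hr1'' : (0:ℝ) < 1 + r := by linarith
  have hG : ∀ y : ℝ, 0 < (1 + r ^ 2) + (r ^ 2 - 1) * Real.cos y := by
    intro y
    nlinarith [mul_nonneg (by nlinarith : (0:ℝ) ≤ 1 - r^2)
      (by linarith [Real.cos_le_one y] : (0:ℝ) ≤ 1 - Real.cos y), mul_pos hr0 hr0]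
  have hcneg : ∀ y : ℝ, -(1 + r) / (1 - r) + Real.cos y < 0 := by
    intro y
    have h1 := Real.cos_le_one y
    have : -(1 + r) / (1 - r) < -1 := by
      rw [div_lt_iff₀ hr1']
      nlinarith
    linarith
  set F : ℝ → ℝ := fun y => Real.sin y * Real.log ((1 + r ^ 2) + (r ^ 2 - 1) * Real.cos y)
      - Real.sin y - ((1 - r) / (1 + r)) * y
      - (4 * r / (1 - r ^ 2)) *
          Real.arctan (Real.sin y / (-(1 + r) / (1 - r) + Real.cos y)) with hF
  have hderiv : ∀ y ∈ Set.uIcc (0:ℝ) (2 * π),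
      HasDerivAt F (Real.log ((1 + r ^ 2) + (r ^ 2 - 1) * Real.cos y) * Real.cos y) y := by
    intro y _
    have hsin := Real.hasDerivAt_sin y
    have hcos := Real.hasDerivAt_cos y
    have hGy : HasDerivAt (fun y => (1 + r ^ 2) + (r ^ 2 - 1) * Real.cos y)
        ((r ^ 2 - 1) * (-Real.sin y)) y := (hcos.const_mul _).const_add _
    have hlog := hGy.log (hG y).ne'
    have hden : HasDerivAt (fun y => -(1 + r) / (1 - r) + Real.cos y) (-Real.sin y) y :=
      hcos.const_add _
    have hq := hsin.div hden (hcneg y).ne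
    have harc := hq.arctan
    have hlin : HasDerivAt (fun y : ℝ => ((1 - r) / (1 + r)) * y) ((1 - r) / (1 + r)) y := by
      simpa using (hasDerivAt_id y).const_mul ((1 - r) / (1 + r))
    have h := (((hsin.mul hlog).sub hsin).sub hlin).sub
      (harc.const_mul (4 * r / (1 - r ^ 2)))
    refine h.congr_deriv ?_
    exact (aux_alg r (Real.sin y) (Real.cos y)
      (Real.log ((1 + r ^ 2) + (r ^ 2 - 1) * Real.cos y)) hr0 hr1
      (Real.sin_sq_add_cos_sq y) (hG y).ne' (hcneg y).ne).symm
  have hint : IntervalIntegrable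
      (fun y => Real.log ((1 + r ^ 2) + (r ^ 2 - 1) * Real.cos y) * Real.cos y)
      MeasureTheory.volume 0 (2 * π) := by
    apply Continuous.intervalIntegrable
    exact (((continuous_const.add (continuous_const.mul Real.continuous_cos)).log
      (fun y => (hG y).ne')).mul Real.continuous_cos)
  rw [intervalIntegral.integral_eq_sub_of_hasDerivAt hderiv hint]
  simp only [hF, Real.sin_two_pi, Real.sin_zero, Real.arctan_zero, zero_div, zero_mul,
    mul_zero, zero_sub, sub_zero, zero_add, mul_zero, sub_self]
  ring
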